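/- Suppose there exists a (K', F', Z', S')-placement delivery array with Z' = F' − g'. Then for any positive integer m divisible by 6, there exists a (K, F, Z, S)-placement delivery array with K = mK', F = mF', Z = mF' − 3g', and S = 8S'. -/

import Mathlib

/-- A `(K,F,Z,S)`-placement delivery array. -/
def IsPDA (K F Z S : ℕ) (P : Fin F → Fin K → Option ℕ) : Prop :=
  (∀ j k s, P j k = some s → 1 ≤ s ∧ s ≤ S) ∧
  (∀ s, 1 ≤ s → s ≤ S → ∃ j k, P j k = some s) ∧
  (∀ k, (Finset.univ.filter fun j => P j k = none).card = Z) ∧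
  (∀ j k k' s, P j k = some s → P j k' = some s → k = k') ∧
  (∀ j j' k s, P j k = some s → P j' k = some s → j = j') ∧
  (∀ j j' k k' s, j ≠ j' → k ≠ k' → P j k = some s → P j' k' = some s →
    P j k' = none ∧ P j' k = none)

namespace PDAHelper

/-- An 8-colouring of the 18 "types" `(a mod 6, shift)`. -/
def col8 (u : ZMod 6) (d : Fin 3) : ℕ :=
  [0,1,2, 3,4,0, 5,1,3, 6,4,2, 7,1,6, 5,4,7].getD (u.val * 3 + d.val) 0

lemma col8_lt : ∀ (u : ZMod 6) (d : Fin 3), col8 u d < 8 := by decide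

lemma col8_surj : ∀ v : Fin 8, ∃ u : ZMod 6, ∃ d : Fin 3, col8 u d = v.val := by decide

lemma col8_spec : ∀ (u u' : ZMod 6) (d d' t : Fin 3),
    col8 u d = col8 u' d' →
      (u = u' → d = d') ∧
      (u + ((d.val : ℕ) : ZMod 6) = u' + ((d'.val : ℕ) : ZMod 6) → d = d') ∧
      (t ≠ d' → ((t.val : ℕ) : ZMod 6) - ((d'.val : ℕ) : ZMod 6) ≠ u' - u) ∧
      (t ≠ d → ((d.val : ℕ) : ZMod 6) - ((t.val : ℕ) : ZMod 6) ≠ u' - u) := by decide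

/-- cyclic distance `b - a (mod m)` as a natural number. -/
def dd (m : ℕ) (a b : Fin m) : ℕ := (b.val + (m - a.val)) % m

lemma dd_lt {m : ℕ} (hm : 0 < m) (a b : Fin m) : dd m a b < m := Nat.mod_lt _ hm

lemma dd_cast {m : ℕ} (a b : Fin m) :
    ((dd m a b : ℕ) : ZMod m) = (b.val : ZMod m) - (a.val : ZMod m) := by
  unfold dd
  rw [ZMod.natCast_mod, Nat.cast_add, Nat.cast_sub a.isLt.le, ZMod.natCast_self]
  ring

lemma castinj {m x y : ℕ} [NeZero m] (hx : x < m) (hy : y < m)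
    (h : (x : ZMod m) = (y : ZMod m)) : x = y := by
  rw [← ZMod.val_cast_of_lt hx, ← ZMod.val_cast_of_lt hy, h]

lemma finCastInj {m : ℕ} [NeZero m] {a b : Fin m}
    (h : (a.val : ZMod m) = (b.val : ZMod m)) : a = b :=
  Fin.ext (castinj a.isLt b.isLt h)

lemma cast6 {m : ℕ} (hm6 : (6 : ℕ) ∣ m) {x y : ℕ}
    (h : (x : ZMod m) = (y : ZMod m)) : (x : ZMod 6) = (y : ZMod 6) := by
  have := congrArg (ZMod.castHom hm6 (ZMod 6)) h
  simpa using this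

lemma count3 {m : ℕ} (hm : 6 ≤ m) (b : Fin m) :
    (Finset.univ.filter fun a : Fin m => dd m a b < 3).card = 3 := by
  haveI : NeZero m := ⟨by omega⟩
  have hm0 : 0 < m := by omega
  -- the inverse map
  have key : ∀ t : ℕ, t < 3 → ∀ h : (b.val + (m - t)) % m < m,
      dd m ⟨(b.val + (m - t)) % m, h⟩ b = t := by
    intro t ht h
    have hc : (((b.val + (m - t)) % m : ℕ) : ZMod m)
        = (b.val : ZMod m) - (t : ZMod m) := by
      rw [ZMod.natCast_mod, Nat.cast_add, Nat.cast_sub (by omega : t ≤ m),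
        ZMod.natCast_self]
      ring
    have : ((dd m ⟨(b.val + (m - t)) % m, h⟩ b : ℕ) : ZMod m) = (t : ZMod m) := by
      rw [dd_cast]
      show (b.val : ZMod m) - (((b.val + (m - t)) % m : ℕ) : ZMod m) = _
      rw [hc]; ring
    exact castinj (dd_lt hm0 _ _) (by omega) this
  rw [show (3:ℕ) = (Finset.univ : Finset (Fin 3)).card by simp]
  refine Finset.card_bij' (fun a ha => (⟨dd m a b, by simpa using ha⟩ : Fin 3))
    (fun t _ => (⟨(b.val + (m - t.val)) % m, Nat.mod_lt _ hm0⟩ : Fin m))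
    (fun a ha => Finset.mem_univ _)
    (fun t _ => by
      simp only [Finset.mem_filter, Finset.mem_univ, true_and]
      rw [key t.val t.isLt]; exact t.isLt)
    ?_ ?_
  · intro a ha
    apply finCastInj
    show (((b.val + (m - dd m a b)) % m : ℕ) : ZMod m) = (a.val : ZMod m)
    have hlt : dd m a b < 3 := by simpa using ha
    rw [ZMod.natCast_mod, Nat.cast_add, Nat.cast_sub (by have := dd_lt hm0 a b; omega),
      ZMod.natCast_self, dd_cast]
    ring
  · intro t _
    exact Fin.ext (key t.val t.isLt _)

lemma cross_lemma {m : ℕ} (hm6 : (6:ℕ) ∣ m) (hm : 6 ≤ m) {a a' b b' : Fin m}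
    (hd : dd m a b < 3) (hd' : dd m a' b' < 3)
    (hcol : col8 ((a.val : ℕ) : ZMod 6) ⟨dd m a b, hd⟩
      = col8 ((a'.val : ℕ) : ZMod 6) ⟨dd m a' b', hd'⟩)
    (hne : a ≠ a') : ¬ dd m a b' < 3 ∧ ¬ dd m a' b < 3 := by
  haveI : NeZero m := ⟨by omega⟩
  constructor
  · intro ht
    -- a' + d' = a + t in ZMod m  (both sides equal B')
    have e1 : ((a'.val + dd m a' b' : ℕ) : ZMod m) = ((a.val + dd m a b' : ℕ) : ZMod m) := by
      rw [Nat.cast_add, Nat.cast_add, dd_cast, dd_cast]; ring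
    have e6 := cast6 hm6 e1
    rw [Nat.cast_add, Nat.cast_add] at e6
    have htd : (⟨dd m a b', ht⟩ : Fin 3) ≠ ⟨dd m a' b', hd'⟩ := by
      intro hEq
      apply hne
      apply finCastInj
      have : dd m a b' = dd m a' b' := congrArg Fin.val hEq
      have h2 : ((dd m a b' : ℕ) : ZMod m) = ((dd m a' b' : ℕ) : ZMod m) := by rw [this]
      rw [dd_cast, dd_cast] at h2
      linear_combination -h2
    exact (col8_spec _ _ _ _ ⟨dd m a b', ht⟩ hcol).2.2.1 htd (by linear_combination -e6)
  · intro ht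
    -- a + d = a' + t in ZMod m (both sides equal B)
    have e1 : ((a.val + dd m a b : ℕ) : ZMod m) = ((a'.val + dd m a' b : ℕ) : ZMod m) := by
      rw [Nat.cast_add, Nat.cast_add, dd_cast, dd_cast]; ring
    have e6 := cast6 hm6 e1
    rw [Nat.cast_add, Nat.cast_add] at e6
    have htd : (⟨dd m a' b, ht⟩ : Fin 3) ≠ ⟨dd m a b, hd⟩ := by
      intro hEq
      apply hne
      apply finCastInj
      have : dd m a' b = dd m a b := congrArg Fin.val hEq
      have h2 : ((dd m a' b : ℕ) : ZMod m) = ((dd m a b : ℕ) : ZMod m) := by rw [this]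
      rw [dd_cast, dd_cast] at h2
      linear_combination h2
    exact (col8_spec _ _ _ _ ⟨dd m a' b, ht⟩ hcol).2.2.2 htd (by linear_combination e6)

/-- The big PDA. -/
def bigP (m F' K' : ℕ) (P' : Fin F' → Fin K' → Option ℕ)
    (r : Fin (m * F')) (c : Fin (m * K')) : Option ℕ :=
  if h : dd m (finProdFinEquiv.symm r).1 (finProdFinEquiv.symm c).1 < 3 then
    (P' (finProdFinEquiv.symm r).2 (finProdFinEquiv.symm c).2).map
      (fun s => 8 * (s - 1) + col8 (((finProdFinEquiv.symm r).1.val : ℕ) : ZMod 6)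
        ⟨dd m (finProdFinEquiv.symm r).1 (finProdFinEquiv.symm c).1, h⟩ + 1)
  else none

lemma bigP_eq_some {m F' K' : ℕ} {P' : Fin F' → Fin K' → Option ℕ}
    {r : Fin (m * F')} {c : Fin (m * K')} {x : ℕ} :
    bigP m F' K' P' r c = some x ↔
      ∃ h : dd m (finProdFinEquiv.symm r).1 (finProdFinEquiv.symm c).1 < 3,
        ∃ s, P' (finProdFinEquiv.symm r).2 (finProdFinEquiv.symm c).2 = some s ∧
          x = 8 * (s - 1) + col8 (((finProdFinEquiv.symm r).1.val : ℕ) : ZMod 6)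
            ⟨dd m (finProdFinEquiv.symm r).1 (finProdFinEquiv.symm c).1, h⟩ + 1 := by
  unfold bigP
  by_cases h : dd m (finProdFinEquiv.symm r).1 (finProdFinEquiv.symm c).1 < 3
  · rw [dif_pos h]
    constructor
    · intro hx
      obtain ⟨s, hs, hfs⟩ := Option.map_eq_some_iff.mp hx
      exact ⟨h, s, hs, hfs.symm⟩
    · rintro ⟨h', s, hs, rfl⟩
      rw [hs]; rfl
  · rw [dif_neg h]
    constructor
    · intro hx; exact absurd hx (by simp)
    · rintro ⟨h', _⟩; exact absurd h' h

lemma bigP_eq_none {m F' K' : ℕ} {P' : Fin F' → Fin K' → Option ℕ}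
    {r : Fin (m * F')} {c : Fin (m * K')} :
    bigP m F' K' P' r c = none ↔
      ¬ dd m (finProdFinEquiv.symm r).1 (finProdFinEquiv.symm c).1 < 3 ∨
        P' (finProdFinEquiv.symm r).2 (finProdFinEquiv.symm c).2 = none := by
  unfold bigP
  by_cases h : dd m (finProdFinEquiv.symm r).1 (finProdFinEquiv.symm c).1 < 3
  · rw [dif_pos h, Option.map_eq_none_iff]
    constructor
    · intro h2; exact Or.inr h2
    · rintro (h1 | h2)
      · exact absurd h h1
      · exact h2
  · rw [dif_neg h]
    constructor
    · intro _; exact Or.inl h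
    · intro _; rfl

lemma card_filter_equiv {α β : Type*} [Fintype α] [Fintype β]
    (e : α ≃ β) (p : β → Prop) [DecidablePred p] :
    (Finset.univ.filter fun a => p (e a)).card = (Finset.univ.filter p).card := by
  apply Finset.card_equiv e
  intro a
  simp

end PDAHelper

open PDAHelper in
/-- From a `(K',F',Z',S')`-PDA with `Z' = F' - g'`, for every positive `m`
divisible by `6`, there exists an `(mK', mF', mF' - 3g', 8S')`-PDA. -/
theorem pda_cycle_product (K' F' Z' S' g' m : ℕ) (hg : g' ≤ F') (hZ : Z' = F' - g')
    (hm : 0 < m) (hm6 : 6 ∣ m)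
    (hP : ∃ P : Fin F' → Fin K' → Option ℕ, IsPDA K' F' Z' S' P) :
    ∃ P : Fin (m * F') → Fin (m * K') → Option ℕ,
      IsPDA (m * K') (m * F') (m * F' - 3 * g') (8 * S') P := by
  obtain ⟨P', hP1, hP2, hP3, hP4, hP5, hP6⟩ := hP
  haveI : NeZero m := ⟨hm.ne'⟩
  have hm6' : 6 ≤ m := Nat.le_of_dvd hm hm6
  refine ⟨bigP m F' K' P', ?_, ?_, ?_, ?_, ?_, ?_⟩
  · -- bounds
    intro r c x h
    obtain ⟨hd, s, hs, rfl⟩ := bigP_eq_some.mp h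
    have hb := hP1 _ _ _ hs
    have hc := col8_lt (((finProdFinEquiv.symm r).1.val : ℕ) : ZMod 6)
      ⟨dd m (finProdFinEquiv.symm r).1 (finProdFinEquiv.symm c).1, hd⟩
    omega
  · -- all symbols appear
    intro x hx1 hx2
    set s0 : ℕ := (x - 1) / 8 + 1 with hs0
    have hs0b : 1 ≤ s0 ∧ s0 ≤ S' := by constructor <;> omega
    obtain ⟨j, k, hjk⟩ := hP2 s0 hs0b.1 hs0b.2
    obtain ⟨u, t, hut⟩ := col8_surj ⟨(x - 1) % 8, by omega⟩
    have hut' : col8 u t = (x - 1) % 8 := hut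
    have hu6 : u.val < m := lt_of_lt_of_le u.val_lt hm6'
    set a : Fin m := ⟨u.val, hu6⟩ with ha
    set b : Fin m := ⟨(a.val + t.val) % m, Nat.mod_lt _ hm⟩ with hb
    have hddv : dd m a b = t.val := by
      show ((a.val + t.val) % m + (m - a.val)) % m = t.val
      rw [Nat.mod_add_mod, show a.val + t.val + (m - a.val) = t.val + m by omega,
        Nat.add_mod_right]
      exact Nat.mod_eq_of_lt (by have := t.isLt; omega)
    have hdd : dd m a b < 3 := by rw [hddv]; exact t.isLt
    refine ⟨finProdFinEquiv (a, j), finProdFinEquiv (b, k), ?_⟩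
    apply bigP_eq_some.mpr
    rw [Equiv.symm_apply_apply, Equiv.symm_apply_apply]
    refine ⟨hdd, s0, hjk, ?_⟩
    have h1 : (⟨dd m a b, hdd⟩ : Fin 3) = t := Fin.ext hddv
    have h2 : ((a.val : ℕ) : ZMod 6) = u := by
      show ((u.val : ℕ) : ZMod 6) = u
      exact ZMod.natCast_zmod_val u
    rw [h1, h2, hut']
    omega
  · -- star count
    intro c
    have hprod : (Finset.univ.filter fun x : Fin m × Fin F' =>
          ¬ bigP m F' K' P' (finProdFinEquiv x) c = none).card = 3 * g' := by
      have hpred : (Finset.univ.filter fun x : Fin m × Fin F' =>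
            ¬ bigP m F' K' P' (finProdFinEquiv x) c = none)
          = ((Finset.univ.filter fun a : Fin m => dd m a (finProdFinEquiv.symm c).1 < 3) ×ˢ
            (Finset.univ.filter fun j : Fin F' => ¬ P' j (finProdFinEquiv.symm c).2 = none)) := by
        rw [← Finset.filter_product, Finset.univ_product_univ]
        apply Finset.filter_congr
        intro x _
        rw [bigP_eq_none, Equiv.symm_apply_apply]
        tauto
      rw [hpred, Finset.card_product, count3 hm6' (finProdFinEquiv.symm c).1]
      have hjcount : (Finset.univ.filter fun j : Fin F' =>
          ¬ P' j (finProdFinEquiv.symm c).2 = none).card = g' := by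
        have h3k := hP3 (finProdFinEquiv.symm c).2
        have hsum := Finset.card_filter_add_card_filter_not
          (s := (Finset.univ : Finset (Fin F'))) (p := fun j => P' j (finProdFinEquiv.symm c).2 = none)
        rw [Finset.card_univ, Fintype.card_fin] at hsum
        omega
      rw [hjcount]
    have htrans : (Finset.univ.filter fun r : Fin (m * F') =>
          ¬ bigP m F' K' P' r c = none).card = 3 * g' := by
      rw [← card_filter_equiv (finProdFinEquiv : Fin m × Fin F' ≃ Fin (m * F'))
        (fun r => ¬ bigP m F' K' P' r c = none)]
      exact hprod
    have hsum := Finset.card_filter_add_card_filter_not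
      (s := (Finset.univ : Finset (Fin (m * F')))) (p := fun r => bigP m F' K' P' r c = none)
    rw [Finset.card_univ, Fintype.card_fin] at hsum
    omega
  · -- same symbol in a row → same column
    intro r c c' x h h'
    obtain ⟨hd, s, hs, hx⟩ := bigP_eq_some.mp h
    obtain ⟨hd', s', hs', hx'⟩ := bigP_eq_some.mp h'
    have hb1 := hP1 _ _ _ hs
    have hb1' := hP1 _ _ _ hs'
    have hcl := col8_lt (((finProdFinEquiv.symm r).1.val : ℕ) : ZMod 6)
      ⟨dd m (finProdFinEquiv.symm r).1 (finProdFinEquiv.symm c).1, hd⟩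
    have hcl' := col8_lt (((finProdFinEquiv.symm r).1.val : ℕ) : ZMod 6)
      ⟨dd m (finProdFinEquiv.symm r).1 (finProdFinEquiv.symm c').1, hd'⟩
    have hss : s = s' := by omega
    have hvv : col8 (((finProdFinEquiv.symm r).1.val : ℕ) : ZMod 6)
          ⟨dd m (finProdFinEquiv.symm r).1 (finProdFinEquiv.symm c).1, hd⟩
        = col8 (((finProdFinEquiv.symm r).1.val : ℕ) : ZMod 6)
          ⟨dd m (finProdFinEquiv.symm r).1 (finProdFinEquiv.symm c').1, hd'⟩ := by omega
    have hkk : (finProdFinEquiv.symm c).2 = (finProdFinEquiv.symm c').2 := by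
      apply hP4 _ _ _ s hs
      rw [hss]; exact hs'
    have hdeq : (⟨dd m (finProdFinEquiv.symm r).1 (finProdFinEquiv.symm c).1, hd⟩ : Fin 3)
        = ⟨dd m (finProdFinEquiv.symm r).1 (finProdFinEquiv.symm c').1, hd'⟩ :=
      (col8_spec _ _ _ _ 0 hvv).1 rfl
    have hddn : dd m (finProdFinEquiv.symm r).1 (finProdFinEquiv.symm c).1
        = dd m (finProdFinEquiv.symm r).1 (finProdFinEquiv.symm c').1 :=
      congrArg Fin.val hdeq
    have hbb : (finProdFinEquiv.symm c).1 = (finProdFinEquiv.symm c').1 := by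
      apply finCastInj
      have h2 : ((dd m (finProdFinEquiv.symm r).1 (finProdFinEquiv.symm c).1 : ℕ) : ZMod m)
          = ((dd m (finProdFinEquiv.symm r).1 (finProdFinEquiv.symm c').1 : ℕ) : ZMod m) := by
        rw [hddn]
      rw [dd_cast, dd_cast] at h2
      linear_combination h2
    apply finProdFinEquiv.symm.injective
    exact Prod.ext hbb hkk
  · -- same symbol in a column → same row
    intro r r' c x h h'
    obtain ⟨hd, s, hs, hx⟩ := bigP_eq_some.mp h
    obtain ⟨hd', s', hs', hx'⟩ := bigP_eq_some.mp h'
    have hb1 := hP1 _ _ _ hs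
    have hb1' := hP1 _ _ _ hs'
    have hcl := col8_lt (((finProdFinEquiv.symm r).1.val : ℕ) : ZMod 6)
      ⟨dd m (finProdFinEquiv.symm r).1 (finProdFinEquiv.symm c).1, hd⟩
    have hcl' := col8_lt (((finProdFinEquiv.symm r').1.val : ℕ) : ZMod 6)
      ⟨dd m (finProdFinEquiv.symm r').1 (finProdFinEquiv.symm c).1, hd'⟩
    have hss : s = s' := by omega
    have hvv : col8 (((finProdFinEquiv.symm r).1.val : ℕ) : ZMod 6)
          ⟨dd m (finProdFinEquiv.symm r).1 (finProdFinEquiv.symm c).1, hd⟩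
        = col8 (((finProdFinEquiv.symm r').1.val : ℕ) : ZMod 6)
          ⟨dd m (finProdFinEquiv.symm r').1 (finProdFinEquiv.symm c).1, hd'⟩ := by omega
    -- u + d = u' + d' in ZMod 6
    have e1 : (((finProdFinEquiv.symm r).1.val
          + dd m (finProdFinEquiv.symm r).1 (finProdFinEquiv.symm c).1 : ℕ) : ZMod m)
        = (((finProdFinEquiv.symm r').1.val
          + dd m (finProdFinEquiv.symm r').1 (finProdFinEquiv.symm c).1 : ℕ) : ZMod m) := by
      rw [Nat.cast_add, Nat.cast_add, dd_cast, dd_cast]; ring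
    have e6 := cast6 hm6 e1
    rw [Nat.cast_add, Nat.cast_add] at e6
    have hdeq := (col8_spec _ _ _ _ 0 hvv).2.1 e6
    have hddn : dd m (finProdFinEquiv.symm r).1 (finProdFinEquiv.symm c).1
        = dd m (finProdFinEquiv.symm r').1 (finProdFinEquiv.symm c).1 :=
      congrArg Fin.val hdeq
    have haa : (finProdFinEquiv.symm r).1 = (finProdFinEquiv.symm r').1 := by
      apply finCastInj
      have h2 : ((dd m (finProdFinEquiv.symm r).1 (finProdFinEquiv.symm c).1 : ℕ) : ZMod m)
          = ((dd m (finProdFinEquiv.symm r').1 (finProdFinEquiv.symm c).1 : ℕ) : ZMod m) := by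
        rw [hddn]
      rw [dd_cast, dd_cast] at h2
      linear_combination -h2
    have hjj : (finProdFinEquiv.symm r).2 = (finProdFinEquiv.symm r').2 := by
      apply hP5 _ _ _ s hs
      rw [hss]; exact hs'
    apply finProdFinEquiv.symm.injective
    exact Prod.ext haa hjj
  · -- the star condition
    intro r r' c c' x hr hc h h'
    obtain ⟨hd, s, hs, hx⟩ := bigP_eq_some.mp h
    obtain ⟨hd', s', hs', hx'⟩ := bigP_eq_some.mp h'
    have hb1 := hP1 _ _ _ hs
    have hb1' := hP1 _ _ _ hs'
    have hcl := col8_lt (((finProdFinEquiv.symm r).1.val : ℕ) : ZMod 6)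
      ⟨dd m (finProdFinEquiv.symm r).1 (finProdFinEquiv.symm c).1, hd⟩
    have hcl' := col8_lt (((finProdFinEquiv.symm r').1.val : ℕ) : ZMod 6)
      ⟨dd m (finProdFinEquiv.symm r').1 (finProdFinEquiv.symm c').1, hd'⟩
    have hss : s = s' := by omega
    have hvv : col8 (((finProdFinEquiv.symm r).1.val : ℕ) : ZMod 6)
          ⟨dd m (finProdFinEquiv.symm r).1 (finProdFinEquiv.symm c).1, hd⟩
        = col8 (((finProdFinEquiv.symm r').1.val : ℕ) : ZMod 6)
          ⟨dd m (finProdFinEquiv.symm r').1 (finProdFinEquiv.symm c').1, hd'⟩ := by omega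
    subst hss
    by_cases hjj : (finProdFinEquiv.symm r).2 = (finProdFinEquiv.symm r').2
    · by_cases hkk : (finProdFinEquiv.symm c).2 = (finProdFinEquiv.symm c').2
      · -- same underlying cell: use cross lemma
        have hane : (finProdFinEquiv.symm r).1 ≠ (finProdFinEquiv.symm r').1 := by
          intro hEq
          exact hr (finProdFinEquiv.symm.injective (Prod.ext hEq hjj))
        obtain ⟨hcr1, hcr2⟩ := cross_lemma hm6 hm6' hd hd' hvv hane
        constructor
        · exact bigP_eq_none.mpr (Or.inl hcr1)
        · exact bigP_eq_none.mpr (Or.inl hcr2)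
      · exfalso
        apply hkk
        apply hP4 _ _ _ s hs
        rw [hjj]; exact hs'
    · by_cases hkk : (finProdFinEquiv.symm c).2 = (finProdFinEquiv.symm c').2
      · exfalso
        apply hjj
        apply hP5 _ _ _ s hs
        rw [hkk]; exact hs'
      · obtain ⟨hn1, hn2⟩ := hP6 _ _ _ _ s hjj hkk hs hs'
        constructor
        · exact bigP_eq_none.mpr (Or.inr hn1)
        · exact bigP_eq_none.mpr (Or.inr hn2)
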